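/- Let k be a field, p > 2 a prime, and f, d ≥ 1 integers. Let φ denote the k-algebra endomorphism of k[[u]] determined by φ(u) = u^p, applied entrywise to matrices. Fix nonnegative integers t_{i,s} for 1 ≤ i ≤ d and s ∈ ℤ/fℤ, and nonzero scalars a_1, ..., a_d ∈ k^×; for a ∈ k^× write (a)_s = a if s ≡ 0 (mod f) and (a)_s = 1 otherwise. For each i and each s ∈ ℤ/fℤ set α_s(i) = (p^f − 1)^{−1} · Σ_{j=1}^{f} p^{f−j} t_{i, (j+s) mod f} ∈ ℚ. Assume that for all 1 ≤ i < j ≤ d it is NOT the case that simultaneously a_i = a_j and α_s(j) − α_s(i) is a nonnegative integer for every s. Then for every family (B_s)_{s ∈ ℤ/fℤ} of d×d upper triangular matrices over k[[u]] such that the i-th diagonal entry of B_s equals (a_i)_s · u^{t_{i,s}}, there exist upper triangular matrices T_s ∈ GL_d(k[[u]]) with all diagonal entries equal to 1 such that, for every s, the matrix A_s := T_s^{−1} · B_s · φ(T_{s−1}) is upper triangular, its i-th diagonal entry equals (a_i)_s · u^{t_{i,s}}, and for every i < j its (i,j)-entry is a polynomial in u of degree strictly less than t_{j,s}. -/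

import Mathlib

/-- The `k`-algebra endomorphism of `k[[u]]` determined by `u ↦ u^p`,
described coefficientwise: the coefficient of `u^(p*n)` in `φ f` is the
coefficient of `u^n` in `f`, and all other coefficients vanish. -/
noncomputable def phiPS (k : Type*) [Field k] (p : ℕ) (f : PowerSeries k) : PowerSeries k :=
  PowerSeries.mk fun n => if p ∣ n then PowerSeries.coeff (n / p) f else 0

/-- `α_s(t) = (p^f − 1)⁻¹ · Σ_{j=1}^{f} p^{f−j} t_{(j+s) mod f}` as a rational number. -/
noncomputable def alphaQ (p f : ℕ) (t : ZMod f → ℤ) (s : ZMod f) : ℚ :=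
  ((p : ℚ) ^ f - 1)⁻¹ * ∑ j ∈ Finset.Icc 1 f, (p : ℚ) ^ (f - j) * (t (s + (j : ZMod f)) : ℚ)

namespace StmtAux
open PowerSeries

variable {k : Type*} [Field k] {p : ℕ}

lemma coeff_phiPS (g : PowerSeries k) (n : ℕ) :
    coeff n (phiPS k p g) = if p ∣ n then coeff (n / p) g else 0 := by
  simp [phiPS]

lemma phiPS_mul (hp : p ≠ 0) (g h : PowerSeries k) :
    phiPS k p (g * h) = phiPS k p g * phiPS k p h := by
  ext n
  rw [coeff_phiPS]
  conv_lhs => rw [coeff_mul]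
  conv_rhs => rw [coeff_mul]
  have : ∀ x ∈ Finset.HasAntidiagonal.antidiagonal n,
      coeff x.1 (phiPS k p g) * coeff x.2 (phiPS k p h)
      = if p ∣ x.1 ∧ p ∣ x.2 then coeff (x.1 / p) g * coeff (x.2 / p) h else 0 := by
    rintro ⟨x1, x2⟩ -
    rw [coeff_phiPS, coeff_phiPS]
    by_cases h1 : p ∣ x1 <;> by_cases h2 : p ∣ x2 <;> simp [h1, h2]
  rw [Finset.sum_congr rfl this]
  by_cases hn : p ∣ n
  · rw [if_pos hn, ← Finset.sum_filter]
    symm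
    apply Finset.sum_nbij' (i := fun x => (x.1 / p, x.2 / p)) (j := fun y => (p * y.1, p * y.2))
    · rintro ⟨x1, x2⟩ hx
      simp only [Finset.mem_filter, Finset.HasAntidiagonal.mem_antidiagonal] at hx
      simp only [Finset.HasAntidiagonal.mem_antidiagonal]
      obtain ⟨rfl, h1, h2⟩ := hx
      obtain ⟨a, rfl⟩ := h1; obtain ⟨b, rfl⟩ := h2
      rw [Nat.mul_div_cancel_left _ (Nat.pos_of_ne_zero hp),
        Nat.mul_div_cancel_left _ (Nat.pos_of_ne_zero hp), ← Nat.mul_add,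
        Nat.mul_div_cancel_left _ (Nat.pos_of_ne_zero hp)]
    · rintro ⟨y1, y2⟩ hy
      simp only [Finset.HasAntidiagonal.mem_antidiagonal] at hy
      simp only [Finset.mem_filter, Finset.HasAntidiagonal.mem_antidiagonal]
      refine ⟨?_, ⟨y1, rfl⟩, ⟨y2, rfl⟩⟩
      rw [← Nat.mul_add, hy, Nat.mul_div_cancel' hn]
    · rintro ⟨x1, x2⟩ hx
      simp only [Finset.mem_filter, Finset.HasAntidiagonal.mem_antidiagonal] at hx
      obtain ⟨-, h1, h2⟩ := hx
      simp [Nat.mul_div_cancel' h1, Nat.mul_div_cancel' h2]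
    · rintro ⟨y1, y2⟩ -
      simp [Nat.mul_div_cancel_left _ (Nat.pos_of_ne_zero hp)]
    · rintro ⟨x1, x2⟩ -
      rfl
  · rw [if_neg hn]
    symm
    apply Finset.sum_eq_zero
    rintro ⟨x1, x2⟩ hx
    rw [if_neg]
    rintro ⟨h1, h2⟩
    exact hn (Finset.HasAntidiagonal.mem_antidiagonal.mp hx ▸ Nat.dvd_add h1 h2)

lemma phiPS_one (hp : p ≠ 0) : phiPS k p (1 : PowerSeries k) = 1 := by
  ext n
  rw [coeff_phiPS]
  simp only [coeff_one]
  by_cases hn' : n = 0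
  · simp [hn']
  · rw [if_neg hn']
    by_cases h : p ∣ n
    · have h2 : n / p ≠ 0 := by
        obtain ⟨a, rfl⟩ := h
        rw [Nat.mul_div_cancel_left _ (Nat.pos_of_ne_zero hp)]
        rintro rfl
        exact hn' (by simp)
      rw [if_pos h, if_neg h2]
    · rw [if_neg h]

noncomputable def phiHom (k : Type*) [Field k] (p : ℕ) (hp : p ≠ 0) :
    PowerSeries k →+* PowerSeries k where
  toFun := phiPS k p
  map_one' := phiPS_one hp
  map_mul' := phiPS_mul hp
  map_zero' := by ext n; simp [coeff_phiPS]
  map_add' g h := by ext n; by_cases hd : p ∣ n <;> simp [coeff_phiPS, hd]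

lemma phiHom_apply (hp : p ≠ 0) (g : PowerSeries k) : phiHom k p hp g = phiPS k p g := rfl

end StmtAux

namespace StmtAux
open Finset

section Orbit
variable (p f : ℕ) (ti tj : ZMod f → ℕ)

/-- One dependency step of the coefficient recursion. -/
def Fstep (v : ZMod f × ℕ) : Option (ZMod f × ℕ) :=
  if ti v.1 ≤ v.2 + tj v.1 ∧ p ∣ (v.2 + tj v.1 - ti v.1) then
    some (v.1 - 1, (v.2 + tj v.1 - ti v.1) / p) else none

def Fiter : ℕ → ZMod f × ℕ → Option (ZMod f × ℕ)
  | 0, v => some v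
  | n+1, v => (Fiter n v).bind (Fstep p f ti tj)

variable {p f ti tj}

lemma Fiter_zero (v) : Fiter p f ti tj 0 v = some v := rfl

lemma Fiter_succ (n v) :
    Fiter p f ti tj (n+1) v = (Fiter p f ti tj n v).bind (Fstep p f ti tj) := rfl

lemma Fiter_add (m n : ℕ) (v) :
    Fiter p f ti tj (m + n) v = (Fiter p f ti tj m v).bind (Fiter p f ti tj n) := by
  induction n with
  | zero => cases Fiter p f ti tj m v <;> rfl
  | succ n ih =>
      rw [← Nat.add_assoc, Fiter_succ, ih]
      cases Fiter p f ti tj m v <;> simp [Fiter_succ]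

lemma Fstep_fst {v u} (h : Fstep p f ti tj v = some u) : u.1 = v.1 - 1 := by
  unfold Fstep at h
  split_ifs at h
  · cases h; rfl

lemma Fiter_fst {n : ℕ} {v u} (h : Fiter p f ti tj n v = some u) : u.1 = v.1 - n := by
  induction n generalizing u with
  | zero => cases h; simp
  | succ n ih =>
      rw [Fiter_succ] at h
      rcases Option.bind_eq_some_iff.mp h with ⟨w, hw, hsw⟩
      rw [Fstep_fst hsw, ih hw]
      push_cast
      ring

lemma Fstep_mono {v w v' w'} (h1 : v.1 = w.1) (h2 : v.2 ≤ w.2)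
    (hv : Fstep p f ti tj v = some v') (hw : Fstep p f ti tj w = some w') :
    v'.1 = w'.1 ∧ v'.2 ≤ w'.2 := by
  unfold Fstep at hv hw
  split_ifs at hv hw
  cases hv; cases hw
  refine ⟨by rw [h1], ?_⟩
  simp only
  rw [h1]
  exact Nat.div_le_div_right (by omega)

lemma Fiter_mono {n : ℕ} {v w v' w'} (h1 : v.1 = w.1) (h2 : v.2 ≤ w.2)
    (hv : Fiter p f ti tj n v = some v') (hw : Fiter p f ti tj n w = some w') :
    v'.1 = w'.1 ∧ v'.2 ≤ w'.2 := by
  induction n generalizing v' w' with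
  | zero => cases hv; cases hw; exact ⟨h1, h2⟩
  | succ n ih =>
      rw [Fiter_succ] at hv hw
      rcases Option.bind_eq_some_iff.mp hv with ⟨a, ha, hsa⟩
      rcases Option.bind_eq_some_iff.mp hw with ⟨b, hb, hsb⟩
      obtain ⟨g1, g2⟩ := ih ha hb
      exact Fstep_mono g1 g2 hsa hsb

lemma Fstep_block {M0 : ℕ} (hp : 2 ≤ p) (hM : ∀ s, tj s ≤ M0) {v v'}
    (hv : v.2 ≤ M0) (h : Fstep p f ti tj v = some v') : v'.2 ≤ M0 := by
  unfold Fstep at h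
  split_ifs at h
  cases h
  simp only
  have h1 : v.2 + tj v.1 - ti v.1 ≤ 2 * M0 := by have := hM v.1; omega
  calc (v.2 + tj v.1 - ti v.1) / p ≤ (2 * M0) / p := Nat.div_le_div_right h1
    _ ≤ (2 * M0) / 2 := Nat.div_le_div_left hp two_pos
    _ = M0 := by omega

lemma Fstep_dec {M0 : ℕ} (hp : 2 ≤ p) (hM : ∀ s, tj s ≤ M0) {v v'}
    (hv : M0 < v.2) (h : Fstep p f ti tj v = some v') : v'.2 < v.2 := by
  unfold Fstep at h
  split_ifs at h
  cases h
  simp only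
  have h1 : v.2 + tj v.1 - ti v.1 ≤ v.2 + M0 := by have := hM v.1; omega
  calc (v.2 + tj v.1 - ti v.1) / p ≤ (v.2 + M0) / p := Nat.div_le_div_right h1
    _ ≤ (v.2 + M0) / 2 := Nat.div_le_div_left hp two_pos
    _ < v.2 := by omega

lemma Fstep_arith {v u} (h : Fstep p f ti tj v = some u) :
    (p : ℤ) * u.2 = (v.2 : ℤ) + tj v.1 - ti v.1 := by
  unfold Fstep at h
  split_ifs at h with hc
  cases h
  simp only
  have h2 := Nat.div_mul_cancel hc.2
  have : ((v.2 + tj v.1 - ti v.1 : ℕ) : ℤ) = (v.2 : ℤ) + tj v.1 - ti v.1 := by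
    omega
  have h3 : (((v.2 + tj v.1 - ti v.1) / p : ℕ) : ℤ) * (p : ℤ)
      = ((v.2 + tj v.1 - ti v.1 : ℕ) : ℤ) := by exact_mod_cast h2
  rw [mul_comm, h3, this]

lemma Fiter_prefix {q : ℕ} {v u} (h : Fiter p f ti tj q v = some u) {n : ℕ} (hn : n ≤ q) :
    ∃ w, Fiter p f ti tj n v = some w := by
  rw [show q = n + (q - n) by omega, Fiter_add] at h
  rcases hw : Fiter p f ti tj n v with _ | w
  · rw [hw] at h; simp at h
  · exact ⟨w, rfl⟩

lemma Fiter_period {q : ℕ} {v} (h : Fiter p f ti tj q v = some v) (n : ℕ) :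
    Fiter p f ti tj (q + n) v = Fiter p f ti tj n v := by
  rw [Fiter_add, h, Option.bind_some]

lemma Fiter_all {q : ℕ} {v} (hq : 1 ≤ q) (h : Fiter p f ti tj q v = some v) (n : ℕ) :
    ∃ u, Fiter p f ti tj n v = some u := by
  induction n using Nat.strong_induction_on with
  | _ n ih =>
    rcases le_or_gt n q with hn | hn
    · exact Fiter_prefix h hn
    · have : Fiter p f ti tj n v = Fiter p f ti tj (n - q) v := by
        conv_lhs => rw [show n = q + (n - q) by omega]
        exact Fiter_period h _
      rw [this]
      exact ih _ (by omega)

end Orbit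

end StmtAux

namespace StmtAux
open Finset

section Alpha
variable {p f : ℕ} {ti tj : ZMod f → ℕ}

lemma Fiter_telescope {n : ℕ} {v u} (h : Fiter p f ti tj n v = some u) :
    (v.2 : ℤ) = p ^ n * u.2
      - ∑ l ∈ range n, p ^ l * ((tj (v.1 - l) : ℤ) - ti (v.1 - l)) := by
  induction n generalizing u with
  | zero => cases h; simp
  | succ n ih =>
      rw [Fiter_succ] at h
      rcases Option.bind_eq_some_iff.mp h with ⟨w, hw, hsw⟩
      have h1 := ih hw
      have h2 := Fstep_arith hsw
      have h3 : w.1 = v.1 - (n : ℕ) := Fiter_fst hw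
      have h4 : (w.2 : ℤ) = p * u.2 - ((tj (v.1 - n) : ℤ) - ti (v.1 - n)) := by
        rw [← h3]; omega
      rw [sum_range_succ]
      rw [h1, h4]
      ring

lemma alpha_diff_eq {s : ZMod f} (hp : 2 ≤ p) (hf : 1 ≤ f) :
    alphaQ p f (fun s' => (tj s' : ℤ)) s - alphaQ p f (fun s' => (ti s' : ℤ)) s
      = ((p : ℚ) ^ f - 1)⁻¹
        * ∑ l ∈ range f, (p : ℚ) ^ l * ((tj (s - l) : ℚ) - (ti (s - l) : ℚ)) := by
  unfold alphaQ
  rw [← mul_sub, ← Finset.sum_sub_distrib]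
  congr 1
  refine Finset.sum_nbij' (i := fun j => f - j) (j := fun l => f - l) ?_ ?_ ?_ ?_ ?_
  · intro j hj; simp only [mem_Icc] at hj; simp only [mem_range]; omega
  · intro l hl; simp only [mem_range] at hl; simp only [mem_Icc]; omega
  · intro j hj; simp only [mem_Icc] at hj; omega
  · intro l hl; simp only [mem_range] at hl; omega
  · intro j hj
    simp only [mem_Icc] at hj
    have hcast : s - ((f - j : ℕ) : ZMod f) = s + (j : ZMod f) := by
      rw [Nat.cast_sub hj.2, ZMod.natCast_self, zero_sub, sub_neg_eq_add]
    simp only [hcast]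
    push_cast
    ring

lemma alpha_of_fperiodic_self (hp : 2 ≤ p) (hf : 1 ≤ f) {v} 
    (h : Fiter p f ti tj f v = some v) :
    alphaQ p f (fun s' => (tj s' : ℤ)) v.1 - alphaQ p f (fun s' => (ti s' : ℤ)) v.1
      = (v.2 : ℚ) := by
  have hP : ((p : ℚ) ^ f - 1) ≠ 0 := by
    have h2 : (1 : ℚ) < (p : ℚ) ^ f :=
      one_lt_pow₀ (by exact_mod_cast hp) (by omega)
    exact sub_ne_zero.mpr (ne_of_gt h2)
  have htel := Fiter_telescope h
  have hS : (∑ l ∈ range f, (p : ℤ) ^ l * ((tj (v.1 - l) : ℤ) - ti (v.1 - l)))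
      = ((p : ℤ) ^ f - 1) * v.2 := by push_cast at htel ⊢; linarith
  rw [alpha_diff_eq hp hf]
  have hSQ : (∑ l ∈ range f, (p : ℚ) ^ l * ((tj (v.1 - l) : ℚ) - (ti (v.1 - l) : ℚ)))
      = ((p : ℚ) ^ f - 1) * (v.2 : ℚ) := by exact_mod_cast hS
  rw [hSQ, inv_mul_cancel_left₀ hP]

lemma alpha_of_fperiodic (hp : 2 ≤ p) (hf : 1 ≤ f) {v}
    (h : Fiter p f ti tj f v = some v) (s : ZMod f) :
    ∃ n : ℕ, alphaQ p f (fun s' => (tj s' : ℤ)) s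
      - alphaQ p f (fun s' => (ti s' : ℤ)) s = n := by
  haveI : NeZero f := ⟨by omega⟩
  set l := (v.1 - s).val with hl
  obtain ⟨u, hu⟩ := Fiter_prefix h (le_of_lt ((v.1 - s).val_lt))
  have hufst : u.1 = s := by
    rw [Fiter_fst hu, ← hl, ZMod.natCast_zmod_val]
    ring
  have huper : Fiter p f ti tj f u = some u := by
    have e1 : Fiter p f ti tj (f + l) v = some u := by
      rw [Fiter_period h l]; exact hu
    have e2 : Fiter p f ti tj (l + f) v = Fiter p f ti tj f u := by
      rw [Fiter_add, hu, Option.bind_some]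
    rw [← e2, Nat.add_comm]; exact e1
  exact ⟨u.2, by rw [← hufst]; exact alpha_of_fperiodic_self hp hf huper⟩

lemma periodic_f (hf : 1 ≤ f) {q : ℕ} (hq : 1 ≤ q) {v}
    (h : Fiter p f ti tj q v = some v) : Fiter p f ti tj f v = some v := by
  have hdvd : f ∣ q := by
    have h1 := Fiter_fst h
    have h2 : (q : ZMod f) = 0 := sub_eq_self.mp h1.symm
    exact (ZMod.natCast_eq_zero_iff q f).mp h2
  obtain ⟨e, rfl⟩ := hdvd
  have he : 1 ≤ e := by by_contra hc; push_neg at hc; interval_cases e <;> simp_all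
  choose μ hμ using Fiter_all hq h
  have hμ0 : μ 0 = v := by
    have := hμ 0; rw [Fiter_zero] at this; exact (Option.some_inj.mp this).symm
  have hμq : μ (e * f) = v := by
    have h3 : Fiter p f ti tj (e * f) v = some v := by
      rw [show e * f = f * e by ring]; exact h
    rw [hμ (e * f)] at h3
    exact Option.some_inj.mp h3
  have hfstf : ∀ l : ℕ, (μ (l * f)).1 = v.1 := by
    intro l
    rw [Fiter_fst (hμ (l * f))]
    have hc : ((l * f : ℕ) : ZMod f) = 0 := by
      rw [Nat.cast_mul, ZMod.natCast_self, mul_zero]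
    rw [hc, sub_zero]
  have hstep : ∀ l : ℕ, Fiter p f ti tj f (μ (l * f)) = some (μ ((l + 1) * f)) := by
    intro l
    have e2 : Fiter p f ti tj (l * f + f) v = Fiter p f ti tj f (μ (l * f)) := by
      rw [Fiter_add, hμ (l * f), Option.bind_some]
    rw [← e2, show l * f + f = (l + 1) * f by ring]
    exact hμ _
  set g : ℕ → ℕ := fun l => (μ (l * f)).2 with hg
  have key : g 1 = g 0 := by
    rcases le_total (g 0) (g 1) with hle | hle
    · have mono : ∀ l, g l ≤ g (l + 1) := by
        intro l
        induction l with
        | zero => exact hle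
        | succ l ih =>
            exact (Fiter_mono (by rw [hfstf, hfstf]) ih (hstep l) (hstep (l + 1))).2
      have monoF : Monotone g := monotone_nat_of_le_succ mono
      have hgE : g e = g 0 := by
        simp only [hg, Nat.zero_mul]; rw [hμq, hμ0]
      exact le_antisymm (le_of_le_of_eq (monoF he) hgE) hle
    · have mono : ∀ l, g (l + 1) ≤ g l := by
        intro l
        induction l with
        | zero => exact hle
        | succ l ih =>
            exact (Fiter_mono (by rw [hfstf, hfstf]) ih (hstep (l + 1)) (hstep l)).2
      have monoF : Antitone g := antitone_nat_of_succ_le mono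
      have hgE : g e = g 0 := by
        simp only [hg, Nat.zero_mul]; rw [hμq, hμ0]
      exact le_antisymm hle (le_of_eq_of_le hgE.symm (monoF he))
  have hμf : μ (1 * f) = v := by
    apply Prod.ext
    · rw [hfstf 1]
    · have h5 : g 1 = v.2 := by
        rw [key]; simp only [hg, Nat.zero_mul]; rw [hμ0]
      exact h5
  have h6 := hstep 0
  rw [Nat.zero_mul, hμ0, Nat.zero_add, hμf] at h6
  exact h6

end Alpha
end StmtAux

namespace StmtAux
open Finset

section Solve
variable {k : Type*} [Field k]

/-- the scalar picked up when crossing `s = 0` -/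
def Lc (ai aj : kˣ) (s : ZMod f) : k := if s = 0 then ((aj : k))⁻¹ * (ai : k) else 1

variable (p f : ℕ) (ti tj : ZMod f → ℕ)

def FW (M0 : ℕ) (w : ZMod f × Fin (M0 + 1)) : Option (ZMod f × Fin (M0 + 1)) :=
  (Fstep p f ti tj (w.1, (w.2 : ℕ))).bind
    (fun v' => if h2 : v'.2 ≤ M0 then some (v'.1, ⟨v'.2, by omega⟩) else none)

def FWiter (M0 : ℕ) : ℕ → ZMod f × Fin (M0 + 1) → Option (ZMod f × Fin (M0 + 1))
  | 0, w => some w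
  | n+1, w => (FWiter M0 n w).bind (FW p f ti tj M0)

variable {p f ti tj} {M0 : ℕ}

lemma FW_none {w} (h : Fstep p f ti tj (w.1, (w.2 : ℕ)) = none) :
    FW p f ti tj M0 w = none := by
  unfold FW; rw [h]; rfl

lemma FW_some (hp : 2 ≤ p) (hM : ∀ s, tj s ≤ M0) {w v'}
    (h : Fstep p f ti tj (w.1, (w.2 : ℕ)) = some v') :
    FW p f ti tj M0 w = some (v'.1, ⟨v'.2, by
      have := Fstep_block hp hM (v := (w.1, (w.2 : ℕ))) (by
        exact Nat.lt_succ_iff.mp w.2.isLt) h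
      omega⟩) := by
  have hb := Fstep_block hp hM (v := (w.1, (w.2 : ℕ)))
    (Nat.lt_succ_iff.mp w.2.isLt) h
  unfold FW
  rw [h, Option.bind_some, dif_pos hb]

lemma FW_fst {w w'} (h : FW p f ti tj M0 w = some w') : w'.1 = w.1 - 1 := by
  unfold FW at h
  rcases Option.bind_eq_some_iff.mp h with ⟨v', hs, h2⟩
  split_ifs at h2
  cases h2
  exact Fstep_fst hs

lemma FWiter_zero (w) : FWiter p f ti tj M0 0 w = some w := rfl

lemma FWiter_succ (n w) : FWiter p f ti tj M0 (n+1) w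
    = (FWiter p f ti tj M0 n w).bind (FW p f ti tj M0) := rfl

lemma FWiter_add (m n : ℕ) (w) : FWiter p f ti tj M0 (m + n) w
    = (FWiter p f ti tj M0 m w).bind (FWiter p f ti tj M0 n) := by
  induction n with
  | zero => cases FWiter p f ti tj M0 m w <;> rfl
  | succ n ih =>
      rw [← Nat.add_assoc, FWiter_succ, ih]
      cases FWiter p f ti tj M0 m w <;> simp [FWiter_succ]

lemma FWiter_emb (hp : 2 ≤ p) (hM : ∀ s, tj s ≤ M0) (n : ℕ) (w) :
    Option.map (fun u : ZMod f × Fin (M0 + 1) => (u.1, (u.2 : ℕ)))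
      (FWiter p f ti tj M0 n w) = Fiter p f ti tj n (w.1, (w.2 : ℕ)) := by
  induction n with
  | zero => rfl
  | succ n ih =>
      rw [FWiter_succ, Fiter_succ, ← ih]
      cases hit : FWiter p f ti tj M0 n w with
      | none => simp
      | some u =>
          simp only [Option.bind_some, Option.map_some]
          cases hs : Fstep p f ti tj (u.1, (u.2 : ℕ)) with
          | none => rw [FW_none hs]; rfl
          | some v' => rw [FW_some hp hM hs]; rfl

end Solve
end StmtAux

namespace StmtAux
open Finset

section Solve2
variable {k : Type*} [Field k] {p f : ℕ} {ti tj : ZMod f → ℕ} {M0 : ℕ}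

lemma FWiter_fst {n : ℕ} {w u} (h : FWiter p f ti tj M0 n w = some u) :
    u.1 = w.1 - (n : ZMod f) := by
  induction n generalizing u with
  | zero => cases h; simp
  | succ n ih =>
      rw [FWiter_succ] at h
      rcases Option.bind_eq_some_iff.mp h with ⟨u', hu', hsu⟩
      rw [FW_fst hsu, ih hu']
      push_cast
      ring

lemma Lc_prod (hf : 1 ≤ f) (ai aj : kˣ) (s0 : ZMod f) :
    (∏ l ∈ range f, Lc ai aj (s0 - (l : ZMod f))) = (aj : k)⁻¹ * (ai : k) := by
  haveI : NeZero f := ⟨by omega⟩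
  rw [Finset.prod_eq_single s0.val]
  · unfold Lc
    rw [ZMod.natCast_zmod_val, sub_self, if_pos rfl]
  · intro l hl hne
    unfold Lc
    rw [if_neg]
    intro hzero
    apply hne
    have h1 : (l : ZMod f) = s0 := (sub_eq_zero.mp hzero).symm
    rw [← h1, ZMod.val_cast_of_lt (mem_range.mp hl)]
  · intro hmem; exact absurd (mem_range.mpr s0.val_lt) hmem

lemma homog_zero (hp : 2 ≤ p) (hf : 1 ≤ f) (hM : ∀ s, tj s ≤ M0) {ai aj : kˣ}
    (hna : ¬(ai = aj ∧ ∀ s : ZMod f, ∃ n : ℕ,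
      alphaQ p f (fun s' => (tj s' : ℤ)) s - alphaQ p f (fun s' => (ti s' : ℤ)) s = n))
    (y : ZMod f × Fin (M0 + 1) → k)
    (hy : ∀ w, y w = Option.elim (FW p f ti tj M0 w) 0 (fun w' => Lc ai aj w.1 * y w')) :
    ∀ w, y w = 0 := by
  haveI : NeZero f := ⟨by omega⟩
  have Z2 : ∀ n w u, FWiter p f ti tj M0 n w = some u →
      y w = (∏ l ∈ range n, Lc ai aj (w.1 - (l : ZMod f))) * y u := by
    intro n
    induction n with
    | zero => intro w u h; cases h; simp
    | succ n ih =>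
        intro w u h
        rw [FWiter_succ] at h
        rcases Option.bind_eq_some_iff.mp h with ⟨u', hu', hsu⟩
        have h1 := ih w u' hu'
        have h2 : y u' = Lc ai aj u'.1 * y u := by rw [hy u', hsu]; rfl
        have h3 : u'.1 = w.1 - (n : ZMod f) := FWiter_fst hu'
        rw [prod_range_succ, h1, h2, h3]
        ring
  have Z1 : ∀ n w, FWiter p f ti tj M0 n w = none → y w = 0 := by
    intro n
    induction n with
    | zero => intro w h; rw [FWiter_zero] at h; cases h
    | succ n ih =>
        intro w h
        rw [FWiter_succ] at h
        cases hit : FWiter p f ti tj M0 n w with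
        | none => exact ih w hit
        | some u =>
            rw [hit, Option.bind_some] at h
            have h4 : y u = 0 := by rw [hy u, h]; rfl
            rw [Z2 n w u hit, h4, mul_zero]
  intro w0
  by_cases hterm : ∃ n, FWiter p f ti tj M0 n w0 = none
  · obtain ⟨n, hn⟩ := hterm; exact Z1 n w0 hn
  · push_neg at hterm
    have hall : ∀ n, ∃ u, FWiter p f ti tj M0 n w0 = some u :=
      fun n => Option.ne_none_iff_exists'.mp (hterm n)
    choose seq hseq using hall
    obtain ⟨n1, n2, hne, heq⟩ := Finite.exists_ne_map_eq_of_infinite seq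
    have main : ∀ m1 m2, m1 < m2 → seq m1 = seq m2 → y w0 = 0 := by
      intro m1 m2 hlt he
      set w1 := seq m1 with hw1
      have hq : FWiter p f ti tj M0 (m2 - m1) w1 = some w1 := by
        have h4 := FWiter_add (p := p) (f := f) (ti := ti) (tj := tj) (M0 := M0)
          m1 (m2 - m1) w0
        rw [show m1 + (m2 - m1) = m2 by omega, hseq m2, hseq m1, Option.bind_some] at h4
        rw [← h4, he]
      have hVq : Fiter p f ti tj (m2 - m1) (w1.1, (w1.2 : ℕ)) = some (w1.1, (w1.2 : ℕ)) := by
        rw [← FWiter_emb hp hM, hq]; rfl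
      have hVf := periodic_f hf (by omega) hVq
      have halpha := alpha_of_fperiodic hp hf hVf
      have hai : ai ≠ aj := fun hEq => hna ⟨hEq, halpha⟩
      have hWf : FWiter p f ti tj M0 f w1 = some w1 := by
        have h5 := FWiter_emb (ti := ti) hp hM f w1
        rw [hVf] at h5
        cases hh : FWiter p f ti tj M0 f w1 with
        | none => rw [hh] at h5; simp at h5
        | some u =>
            rw [hh] at h5
            simp only [Option.map_some, Option.some_inj] at h5
            have e1 : u.1 = w1.1 := congrArg (Prod.fst : ZMod f × ℕ → ZMod f) h5
            have e2 : (u.2 : ℕ) = (w1.2 : ℕ) := congrArg (Prod.snd : ZMod f × ℕ → ℕ) h5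
            rw [show u = w1 from Prod.ext e1 (Fin.ext e2)]
      have hcyc := Z2 f w1 w1 hWf
      rw [Lc_prod hf] at hcyc
      have hLne : (aj : k)⁻¹ * (ai : k) ≠ 1 := by
        intro hone
        apply hai
        have haj : (aj : k) ≠ 0 := aj.ne_zero
        apply Units.ext
        field_simp at hone
        exact hone
      have hyw1 : y w1 = 0 := by
        by_contra hne0
        apply hLne
        exact (mul_right_cancel₀ hne0 (by rw [one_mul]; exact hcyc)).symm
      rw [Z2 m1 w0 w1 (hseq m1), hyw1, mul_zero]
    rcases lt_trichotomy n1 n2 with h | h | h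
    · exact main n1 n2 h heq
    · exact absurd h hne
    · exact main n2 n1 h heq.symm

lemma solveBlock (hp : 2 ≤ p) (hf : 1 ≤ f) (hM : ∀ s, tj s ≤ M0) {ai aj : kˣ}
    (hna : ¬(ai = aj ∧ ∀ s : ZMod f, ∃ n : ℕ,
      alphaQ p f (fun s' => (tj s' : ℤ)) s - alphaQ p f (fun s' => (ti s' : ℤ)) s = n))
    (b : ZMod f × Fin (M0 + 1) → k) :
    ∃ y : ZMod f × Fin (M0 + 1) → k, ∀ w,
      y w = b w + Option.elim (FW p f ti tj M0 w) 0 (fun w' => Lc ai aj w.1 * y w') := by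
  haveI : NeZero f := ⟨by omega⟩
  set T : ((ZMod f × Fin (M0 + 1)) → k) →ₗ[k] ((ZMod f × Fin (M0 + 1)) → k) :=
    { toFun := fun y w => y w
        - Option.elim (FW p f ti tj M0 w) 0 (fun w' => Lc ai aj w.1 * y w'),
      map_add' := by
        intro y1 y2
        funext w
        cases h : FW p f ti tj M0 w <;> simp [h] <;> ring
      map_smul' := by
        intro c y
        funext w
        cases h : FW p f ti tj M0 w <;> simp [h] <;> ring } with hT
  have hinj : Function.Injective T := by
    rw [← LinearMap.ker_eq_bot, Submodule.eq_bot_iff]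
    intro y hyk
    have hy0 : ∀ w, y w
        = Option.elim (FW p f ti tj M0 w) 0 (fun w' => Lc ai aj w.1 * y w') := by
      intro w
      have h6 := congrFun (LinearMap.mem_ker.mp hyk) w
      simp only [hT, LinearMap.coe_mk, AddHom.coe_mk, Pi.zero_apply] at h6
      exact sub_eq_zero.mp h6
    funext w
    exact homog_zero hp hf hM hna y hy0 w
  have hsurj : Function.Surjective T := LinearMap.injective_iff_surjective.mp hinj
  obtain ⟨y, hy⟩ := hsurj b
  refine ⟨y, fun w => ?_⟩
  have h7 := congrFun hy w
  simp only [hT, LinearMap.coe_mk, AddHom.coe_mk] at h7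
  exact sub_eq_iff_eq_add.mp h7

end Solve2
end StmtAux

namespace StmtAux
open Finset

section Tail
variable {k : Type*} [Field k] {f : ℕ}

noncomputable def tailExt (M0 : ℕ) (F : ZMod f × ℕ → Option (ZMod f × ℕ))
    (hF : ∀ v v', F v = some v' → M0 < v.2 → v'.2 < v.2)
    (L : ZMod f → k) (G : ZMod f × ℕ → k) (y0 : ZMod f × ℕ → k)
    (m : ℕ) (s : ZMod f) : k :=
  if hm : m ≤ M0 then y0 (s, m)
  else
    match hFv : F (s, m) with
    | none => G (s, m)
    | some v' => G (s, m) + L s * tailExt M0 F hF L G y0 v'.2 v'.1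
termination_by m
decreasing_by exact hF (s, m) v' hFv (by omega)

lemma tailExt_le {M0 F hF} {L : ZMod f → k} {G y0 m s} (hm : m ≤ M0) :
    tailExt M0 F hF L G y0 m s = y0 (s, m) := by
  rw [tailExt, dif_pos hm]

lemma tailExt_gt_none {M0 F hF} {L : ZMod f → k} {G y0 m s} (hm : ¬ m ≤ M0)
    (h : F (s, m) = none) : tailExt M0 F hF L G y0 m s = G (s, m) := by
  rw [tailExt, dif_neg hm]
  split
  · rfl
  · rename_i v' hv'; rw [h] at hv'; cases hv'

lemma tailExt_gt_some {M0 F hF} {L : ZMod f → k} {G y0 m s v'} (hm : ¬ m ≤ M0)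
    (h : F (s, m) = some v') : tailExt M0 F hF L G y0 m s
      = G (s, m) + L s * tailExt M0 F hF L G y0 v'.2 v'.1 := by
  rw [tailExt, dif_neg hm]
  split
  · rename_i hv'; rw [h] at hv'; cases hv'
  · rename_i u hu
    rw [h] at hu
    cases hu
    rfl

end Tail

section SolveAll
variable {k : Type*} [Field k] {p f : ℕ}

theorem solveAll (hp : 2 ≤ p) (hf : 1 ≤ f) (ti tj : ZMod f → ℕ) {ai aj : kˣ}
    (hna : ¬(ai = aj ∧ ∀ s : ZMod f, ∃ n : ℕ,
      alphaQ p f (fun s' => (tj s' : ℤ)) s - alphaQ p f (fun s' => (ti s' : ℤ)) s = n))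
    (G : ZMod f × ℕ → k) :
    ∃ y : ZMod f × ℕ → k, ∀ v, y v = G v +
      Option.elim (Fstep p f ti tj v) 0 (fun v' => Lc ai aj v.1 * y v') := by
  haveI : NeZero f := ⟨by omega⟩
  set M0 : ℕ := Finset.univ.sup tj with hM0
  have hM : ∀ s, tj s ≤ M0 := fun s => Finset.le_sup (Finset.mem_univ s)
  obtain ⟨yB, hyB⟩ := solveBlock hp hf hM hna
    (fun w : ZMod f × Fin (M0 + 1) => G (w.1, (w.2 : ℕ)))
  set y0 : ZMod f × ℕ → k := fun v =>
    if h : v.2 ≤ M0 then yB (v.1, ⟨v.2, by omega⟩) else 0 with hy0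
  have hdec : ∀ v v', Fstep p f ti tj v = some v' → M0 < v.2 → v'.2 < v.2 :=
    fun v v' h hv => Fstep_dec hp hM hv h
  set Y : ℕ → ZMod f → k := tailExt M0 (Fstep p f ti tj) hdec (Lc ai aj) G y0 with hY
  refine ⟨fun v => Y v.2 v.1, fun v => ?_⟩
  obtain ⟨s, m⟩ := v
  simp only
  by_cases hm : m ≤ M0
  · -- block case
    have hYm : Y m s = yB (s, ⟨m, by omega⟩) := by
      rw [hY, tailExt_le hm, hy0]
      simp only [dif_pos hm]
    rw [hYm, hyB (s, ⟨m, by omega⟩)]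
    congr 1
    cases hs : Fstep p f ti tj (s, m) with
    | none =>
        rw [FW_none (w := (s, ⟨m, by omega⟩)) (by exact hs)]
        rfl
    | some v' =>
        rw [FW_some hp hM (w := (s, ⟨m, by omega⟩)) (by exact hs)]
        simp only [Option.elim_some]
        have hb : v'.2 ≤ M0 :=
          Fstep_block hp hM (v := (s, m)) hm hs
        have hYv' : Y v'.2 v'.1 = yB (v'.1, ⟨v'.2, by omega⟩) := by
          rw [hY, tailExt_le hb, hy0]
          simp only [dif_pos hb]
        rw [hYv']
  · -- tail case
    cases hs : Fstep p f ti tj (s, m) with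
    | none =>
        rw [hY, tailExt_gt_none hm hs]
        simp
    | some v' =>
        rw [hY, tailExt_gt_some hm hs]
        rfl

end SolveAll
end StmtAux

namespace StmtAux
open PowerSeries

section Scalar
variable {k : Type*} [Field k] {p f : ℕ}

theorem scalarLem (hp : 2 ≤ p) (hf : 1 ≤ f)
    (ti tj : ZMod f → ℕ) (ai aj : kˣ)
    (hna : ¬(ai = aj ∧ ∀ s : ZMod f, ∃ n : ℕ,
      alphaQ p f (fun s' => (tj s' : ℤ)) s - alphaQ p f (fun s' => (ti s' : ℤ)) s = n))
    (c : ZMod f → PowerSeries k) :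
    ∃ x : ZMod f → PowerSeries k, ∀ s, ∃ q : Polynomial k,
      q.degree < (tj s : WithBot ℕ) ∧
      c s + (PowerSeries.C (if s = 0 then (ai : k) else 1) * PowerSeries.X ^ ti s)
          * phiPS k p (x (s - 1))
        - x s * (PowerSeries.C (if s = 0 then (aj : k) else 1) * PowerSeries.X ^ tj s)
        = Polynomial.coeToPowerSeries.ringHom q := by
  set avi : ZMod f → k := fun s => if s = 0 then (ai : k) else 1 with havi
  set avj : ZMod f → k := fun s => if s = 0 then (aj : k) else 1 with havj
  have havj_ne : ∀ s, avj s ≠ 0 := by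
    intro s
    simp only [havj]
    split_ifs
    · exact aj.ne_zero
    · exact one_ne_zero
  set G : ZMod f × ℕ → k := fun v => (avj v.1)⁻¹ * coeff (v.2 + tj v.1) (c v.1) with hG
  obtain ⟨y, hy⟩ := solveAll hp hf ti tj hna (ai := ai) (aj := aj) G
  set x : ZMod f → PowerSeries k := fun s => PowerSeries.mk fun m => y (s, m) with hx
  have havjL : ∀ s, avj s * Lc ai aj s = avi s := by
    intro s
    simp only [havj, havi, Lc]
    split_ifs
    · rw [mul_inv_cancel_left₀ aj.ne_zero]
    · rw [one_mul]
  -- the master coefficient computation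
  have master : ∀ s, ∀ n : ℕ, tj s ≤ n →
      coeff n (c s + (PowerSeries.C (avi s) * PowerSeries.X ^ ti s) * phiPS k p (x (s - 1))
        - x s * (PowerSeries.C (avj s) * PowerSeries.X ^ tj s)) = 0 := by
    intro s n hn
    rw [map_sub, map_add]
    have e1 : coeff n (x s * (PowerSeries.C (avj s) * PowerSeries.X ^ tj s))
        = avj s * y (s, n - tj s) := by
      rw [show x s * (PowerSeries.C (avj s) * PowerSeries.X ^ tj s)
          = (PowerSeries.C (avj s) * x s) * PowerSeries.X ^ tj s by ring]
      rw [PowerSeries.coeff_mul_X_pow' _ (tj s) n, if_pos hn, PowerSeries.coeff_C_mul]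
      rw [hx]
      simp
    have e2 : coeff n ((PowerSeries.C (avi s) * PowerSeries.X ^ ti s)
          * phiPS k p (x (s - 1)))
        = avi s * (if ti s ≤ n then
            (if p ∣ (n - ti s) then y (s - 1, (n - ti s) / p) else 0) else 0) := by
      rw [show (PowerSeries.C (avi s) * PowerSeries.X ^ ti s) * phiPS k p (x (s - 1))
          = PowerSeries.C (avi s) * (PowerSeries.X ^ ti s * phiPS k p (x (s - 1))) by ring]
      rw [PowerSeries.coeff_C_mul, PowerSeries.coeff_X_pow_mul' _ (ti s) n]
      congr 1
      split_ifs with h1 h2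
      · rw [coeff_phiPS, if_pos h2, hx]
        simp
      · rw [coeff_phiPS, if_neg h2]
      · rfl
    rw [e1, e2]
    -- use the recursion
    have hrel := hy (s, n - tj s)
    have hmn : n - tj s + tj s = n := by omega
    have hGv : G (s, n - tj s) = (avj s)⁻¹ * coeff n (c s) := by
      rw [hG]; simp only; rw [hmn]
    by_cases hcond : ti s ≤ n ∧ p ∣ (n - ti s)
    · have hFs : Fstep p f ti tj (s, n - tj s)
          = some (s - 1, (n - ti s) / p) := by
        unfold Fstep
        have hcnd : ti s ≤ (n - tj s) + tj s ∧ p ∣ ((n - tj s) + tj s - ti s) := by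
          constructor
          · omega
          · rw [hmn]; exact hcond.2
        rw [if_pos hcnd]
        simp only [hmn]
      rw [hFs] at hrel
      simp only [Option.elim_some] at hrel
      rw [hGv] at hrel
      have : avj s * y (s, n - tj s)
          = coeff n (c s) + avi s * y (s - 1, (n - ti s) / p) := by
        rw [hrel, mul_add, mul_inv_cancel_left₀ (havj_ne s), ← mul_assoc, havjL]
      rw [if_pos hcond.1, if_pos hcond.2, this]
      ring
    · have hFs : Fstep p f ti tj (s, n - tj s) = none := by
        unfold Fstep
        rw [if_neg]
        simp only [hmn]
        omega
      rw [hFs] at hrel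
      simp only [Option.elim_none] at hrel
      rw [hGv] at hrel
      have : avj s * y (s, n - tj s) = coeff n (c s) := by
        rw [hrel, add_zero, mul_inv_cancel_left₀ (havj_ne s)]
      have hite : (if ti s ≤ n then
          (if p ∣ (n - ti s) then y (s - 1, (n - ti s) / p) else 0) else 0) = 0 := by
        split_ifs with h1 h2
        · exact absurd ⟨h1, h2⟩ hcond
        · rfl
        · rfl
      rw [hite, this]
      ring
  refine ⟨x, fun s => ?_⟩
  set E := c s + (PowerSeries.C (avi s) * PowerSeries.X ^ ti s) * phiPS k p (x (s - 1))
    - x s * (PowerSeries.C (avj s) * PowerSeries.X ^ tj s) with hE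
  refine ⟨PowerSeries.trunc (tj s) E, ?_, ?_⟩
  · exact_mod_cast PowerSeries.degree_trunc_lt E (tj s)
  · rw [Polynomial.coeToPowerSeries.ringHom_apply]
    ext n
    rw [Polynomial.coeff_coe, PowerSeries.coeff_trunc]
    split_ifs with h
    · rfl
    · exact master s n (by omega)

end Scalar
end StmtAux

namespace StmtAux

section MatrixHelpers
variable {R : Type*} [CommRing R] {d : ℕ}

lemma lowmul {M N : Matrix (Fin d) (Fin d) R} (hM : ∀ i j, j < i → M i j = 0)
    (hN : ∀ i j, j < i → N i j = 0) : ∀ i j, j < i → (M * N) i j = 0 := by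
  intro i j hji
  rw [Matrix.mul_apply]
  apply Finset.sum_eq_zero
  intro c _
  rcases lt_or_ge c i with h | h
  · rw [hM i c h, zero_mul]
  · rw [hN c j (lt_of_lt_of_le hji h), mul_zero]

lemma diagmul {M N : Matrix (Fin d) (Fin d) R} (hM : ∀ i j, j < i → M i j = 0)
    (hN : ∀ i j, j < i → N i j = 0) (i : Fin d) : (M * N) i i = M i i * N i i := by
  rw [Matrix.mul_apply]
  apply Finset.sum_eq_single i
  · intro c _ hci
    rcases lt_or_gt_of_ne hci with h | h
    · rw [hM i c h, zero_mul]
    · rw [hN c i h, mul_zero]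
  · intro h; exact absurd (Finset.mem_univ i) h

lemma map_std (φ : R → R) (h0 : φ 0 = 0) (i j : Fin d) (c : R) :
    (Matrix.single i j c).map φ = Matrix.single i j (φ c) := by
  ext a b
  simp only [Matrix.map_apply, Matrix.single, Matrix.of_apply]
  split_ifs <;> simp [h0]

lemma entry_conj {i0 j0 : Fin d} (hij : i0 < j0)
    {A : Matrix (Fin d) (Fin d) R} (hA : ∀ i j, j < i → A i j = 0) (x z : R) (a b : Fin d) :
    ((1 - Matrix.single i0 j0 x) * A * (1 + Matrix.single i0 j0 z)) a b
      = A a b + (if b = j0 then A a i0 * z else 0) - (if a = i0 then x * A j0 b else 0) := by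
  have hexp : (1 - Matrix.single i0 j0 x) * A * (1 + Matrix.single i0 j0 z)
      = A + A * Matrix.single i0 j0 z
        - (Matrix.single i0 j0 x * A
           + Matrix.single i0 j0 x * (A * Matrix.single i0 j0 z)) := by
    noncomm_ring
  rw [hexp]
  simp only [Matrix.sub_apply, Matrix.add_apply]
  have h1 : (A * Matrix.single i0 j0 z) a b
      = if b = j0 then A a i0 * z else 0 := by
    split_ifs with h
    · rw [h, Matrix.mul_single_apply_same]
    · exact Matrix.mul_single_apply_of_ne z i0 j0 a b h A
  have h2 : (Matrix.single i0 j0 x * A) a b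
      = if a = i0 then x * A j0 b else 0 := by
    split_ifs with h
    · rw [h, Matrix.single_mul_apply_same]
    · exact Matrix.single_mul_apply_of_ne x i0 j0 a b h A
  have h3 : (Matrix.single i0 j0 x * (A * Matrix.single i0 j0 z)) a b = 0 := by
    by_cases h : a = i0
    · rw [h, Matrix.single_mul_apply_same]
      have h4 : (A * Matrix.single i0 j0 z) j0 b = 0 := by
        by_cases hb : b = j0
        · rw [hb, Matrix.mul_single_apply_same, hA j0 i0 hij, zero_mul]
        · exact Matrix.mul_single_apply_of_ne z i0 j0 j0 b hb A
      rw [h4, mul_zero]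
    · exact Matrix.single_mul_apply_of_ne x i0 j0 a b h
        (A * Matrix.single i0 j0 z)
  rw [h1, h2, h3]
  ring

end MatrixHelpers
end StmtAux

open StmtAux

/-- matrix form of Proposition `extKisin` of the paper, in the case
where there is no nonzero morphism between the rank-one graded pieces. -/
theorem stmt3 {k : Type*} [Field k] {p f d : ℕ} (hp : p.Prime) (hp2 : 2 < p)
    (hf : 1 ≤ f) (hd : 1 ≤ d)
    (t : Fin d → ZMod f → ℕ) (a : Fin d → kˣ)
    (hnomorph : ∀ i j : Fin d, i < j →
      ¬(a i = a j ∧ ∀ s : ZMod f, ∃ n : ℕ,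
        alphaQ p f (fun s' => (t j s' : ℤ)) s - alphaQ p f (fun s' => (t i s' : ℤ)) s = n)) :
    ∀ B : ZMod f → Matrix (Fin d) (Fin d) (PowerSeries k),
      (∀ s, ∀ i j : Fin d, j < i → B s i j = 0) →
      (∀ s, ∀ i : Fin d, B s i i
          = PowerSeries.C (if s = 0 then (a i : k) else 1) * PowerSeries.X ^ (t i s)) →
      ∃ T T' : ZMod f → Matrix (Fin d) (Fin d) (PowerSeries k),
        (∀ s, T s * T' s = 1 ∧ T' s * T s = 1) ∧
        (∀ s, ∀ i j : Fin d, j < i → T s i j = 0) ∧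
        (∀ s, ∀ i : Fin d, T s i i = 1) ∧
        (∀ s,
          (∀ i j : Fin d, j < i → (T' s * B s * (T (s - 1)).map (phiPS k p)) i j = 0) ∧
          (∀ i : Fin d, (T' s * B s * (T (s - 1)).map (phiPS k p)) i i
              = PowerSeries.C (if s = 0 then (a i : k) else 1) * PowerSeries.X ^ (t i s)) ∧
          (∀ i j : Fin d, i < j → ∃ q : Polynomial k, q.degree < (t j s : WithBot ℕ) ∧
            (T' s * B s * (T (s - 1)).map (phiPS k p)) i j
              = Polynomial.coeToPowerSeries.ringHom q)) := by
  intro B hBlow hBdiag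
  have hpne : p ≠ 0 := by omega
  have hp2' : 2 ≤ p := by omega
  have hφmul : ∀ (M N : Matrix (Fin d) (Fin d) (PowerSeries k)),
      (M * N).map (phiPS k p) = M.map (phiPS k p) * N.map (phiPS k p) := by
    intro M N
    exact Matrix.map_mul (f := phiHom k p hpne)
  have hφone : (1 : Matrix (Fin d) (Fin d) (PowerSeries k)).map (phiPS k p) = 1 :=
    Matrix.map_one _ (map_zero (phiHom k p hpne)) (map_one (phiHom k p hpne))
  have hφadd : ∀ (M N : Matrix (Fin d) (Fin d) (PowerSeries k)),
      (M + N).map (phiPS k p) = M.map (phiPS k p) + N.map (phiPS k p) := by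
    intro M N
    refine Matrix.ext fun i j => ?_
    simp only [Matrix.map_apply, Matrix.add_apply]
    exact map_add (phiHom k p hpne) (M i j) (N i j)
  have key : ∀ n : ℕ, ∃ T T' : ZMod f → Matrix (Fin d) (Fin d) (PowerSeries k),
      (∀ s, T s * T' s = 1 ∧ T' s * T s = 1) ∧
      (∀ s, ∀ i j : Fin d, j < i → T s i j = 0) ∧
      (∀ s, ∀ i : Fin d, T s i i = 1) ∧
      (∀ s,
        (∀ i j : Fin d, j < i → (T' s * B s * (T (s - 1)).map (phiPS k p)) i j = 0) ∧
        (∀ i : Fin d, (T' s * B s * (T (s - 1)).map (phiPS k p)) i i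
            = PowerSeries.C (if s = 0 then (a i : k) else 1) * PowerSeries.X ^ (t i s)) ∧
        (∀ i j : Fin d, i < j → (d - 1 - i.val) * d + j.val < n →
          ∃ q : Polynomial k, q.degree < (t j s : WithBot ℕ) ∧
            (T' s * B s * (T (s - 1)).map (phiPS k p)) i j
              = Polynomial.coeToPowerSeries.ringHom q)) := by
    intro n
    induction n with
    | zero =>
        refine ⟨fun _ => 1, fun _ => 1, fun s => ⟨one_mul 1, one_mul 1⟩, ?_, ?_, ?_⟩
        · intro s i j hji
          exact Matrix.one_apply_ne (ne_of_gt hji)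
        · intro s i
          exact Matrix.one_apply_eq i
        · intro s
          refine ⟨?_, ?_, ?_⟩
          · intro i j hji
            rw [hφone, Matrix.one_mul, Matrix.mul_one]
            exact hBlow s i j hji
          · intro i
            rw [hφone, Matrix.one_mul, Matrix.mul_one]
            exact hBdiag s i
          · intro i j _ hlt
            exact absurd hlt (by omega)
    | succ n ih =>
        obtain ⟨T, T', hinv, hTlow, hTdiag, hA⟩ := ih
        by_cases hex : ∃ ij : Fin d × Fin d, ij.1 < ij.2
            ∧ (d - 1 - ij.1.val) * d + ij.2.val = n
        · obtain ⟨⟨i0, j0⟩, hij0, henc0⟩ := hex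
          obtain ⟨x, hxq⟩ := scalarLem hp2' hf (t i0) (t j0) (a i0) (a j0)
            (hnomorph i0 j0 hij0)
            (fun s => (T' s * B s * (T (s - 1)).map (phiPS k p)) i0 j0)
          have hne : j0 ≠ i0 := ne_of_gt hij0
          have hne' : i0 ≠ j0 := ne_of_lt hij0
          -- structural facts about 1 ± E
          have hUlow : ∀ (c : PowerSeries k) (i j : Fin d), j < i →
              (1 + Matrix.single i0 j0 c) i j = 0 := by
            intro c i j hji
            rw [Matrix.add_apply, Matrix.one_apply_ne (ne_of_gt hji),
              Matrix.single_apply_of_ne]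
            · rw [add_zero]
            · rintro ⟨rfl, rfl⟩
              exact absurd hij0 (not_lt_of_gt hji)
          have hUdiag : ∀ (c : PowerSeries k) (i : Fin d),
              (1 + Matrix.single i0 j0 c) i i = 1 := by
            intro c i
            rw [Matrix.add_apply, Matrix.one_apply_eq,
              Matrix.single_apply_of_ne, add_zero]
            rintro ⟨rfl, rfl⟩
            exact hne' rfl
          have hUU : ∀ (c : PowerSeries k),
              (1 + Matrix.single i0 j0 c) * (1 - Matrix.single i0 j0 c)
                = 1 := by
            intro c
            have h1 : (1 + Matrix.single i0 j0 c)
                * (1 - Matrix.single i0 j0 c)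
                = 1 - Matrix.single i0 j0 c * Matrix.single i0 j0 c := by
              noncomm_ring
            rw [h1, Matrix.single_mul_single_of_ne c i0 j0 i0 hne c, sub_zero]
          have hUU' : ∀ (c : PowerSeries k),
              (1 - Matrix.single i0 j0 c) * (1 + Matrix.single i0 j0 c)
                = 1 := by
            intro c
            have h1 : (1 - Matrix.single i0 j0 c)
                * (1 + Matrix.single i0 j0 c)
                = 1 - Matrix.single i0 j0 c * Matrix.single i0 j0 c := by
              noncomm_ring
            rw [h1, Matrix.single_mul_single_of_ne c i0 j0 i0 hne c, sub_zero]
          refine ⟨fun s => T s * (1 + Matrix.single i0 j0 (x s)),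
            fun s => (1 - Matrix.single i0 j0 (x s)) * T' s, ?_, ?_, ?_, ?_⟩
          · intro s
            constructor
            · rw [Matrix.mul_assoc, ← Matrix.mul_assoc (1 + Matrix.single i0 j0 (x s)),
                hUU (x s), Matrix.one_mul, (hinv s).1]
            · rw [Matrix.mul_assoc, ← Matrix.mul_assoc (T' s), (hinv s).2, Matrix.one_mul,
                hUU' (x s)]
          · intro s i j hji
            exact lowmul (hTlow s) (hUlow (x s)) i j hji
          · intro s i
            show (T s * (1 + Matrix.single i0 j0 (x s))) i i = 1
            rw [diagmul (hTlow s) (hUlow (x s)), hTdiag s i, hUdiag (x s) i, one_mul]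
          · intro s
            -- rewrite the new conjugate
            have hφU : ((1 + Matrix.single i0 j0 (x (s - 1))).map (phiPS k p))
                = 1 + Matrix.single i0 j0 (phiPS k p (x (s - 1))) := by
              rw [hφadd, hφone, map_std (phiPS k p) (map_zero (phiHom k p hpne))]
            have hnewA : ∀ a' b' : Fin d,
                (((1 - Matrix.single i0 j0 (x s)) * T' s) * B s
                  * ((T (s - 1) * (1 + Matrix.single i0 j0 (x (s - 1)))).map
                      (phiPS k p))) a' b'
                = (T' s * B s * (T (s - 1)).map (phiPS k p)) a' b'
                  + (if b' = j0 then
                      (T' s * B s * (T (s - 1)).map (phiPS k p)) a' i0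
                        * phiPS k p (x (s - 1)) else 0)
                  - (if a' = i0 then
                      x s * (T' s * B s * (T (s - 1)).map (phiPS k p)) j0 b' else 0) := by
              intro a' b'
              have hgrp : ((1 - Matrix.single i0 j0 (x s)) * T' s) * B s
                  * ((T (s - 1) * (1 + Matrix.single i0 j0 (x (s - 1)))).map
                      (phiPS k p))
                  = (1 - Matrix.single i0 j0 (x s))
                    * (T' s * B s * (T (s - 1)).map (phiPS k p))
                    * (1 + Matrix.single i0 j0 (phiPS k p (x (s - 1)))) := by
                rw [hφmul, hφU]
                simp only [Matrix.mul_assoc]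
              rw [hgrp]
              exact entry_conj hij0 (hA s).1 (x s) (phiPS k p (x (s - 1))) a' b'
            refine ⟨?_, ?_, ?_⟩
            · intro i j hji
              rw [hnewA i j, (hA s).1 i j hji]
              have e2 : (if j = j0 then (T' s * B s * (T (s - 1)).map (phiPS k p)) i i0
                  * phiPS k p (x (s - 1)) else 0) = 0 := by
                split_ifs with hb
                · have hii : i0 < i := by
                    rw [← hb] at hij0
                    exact hij0.trans hji
                  rw [(hA s).1 i i0 hii, zero_mul]
                · rfl
              have e3 : (if i = i0 then
                  x s * (T' s * B s * (T (s - 1)).map (phiPS k p)) j0 j else 0) = 0 := by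
                split_ifs with hb
                · have hjj : j < j0 := by
                    rw [hb] at hji
                    exact hji.trans hij0
                  rw [(hA s).1 j0 j hjj, mul_zero]
                · rfl
              rw [e2, e3]
              ring
            · intro i
              rw [hnewA i i]
              have e2 : (if i = j0 then (T' s * B s * (T (s - 1)).map (phiPS k p)) i i0
                  * phiPS k p (x (s - 1)) else 0) = 0 := by
                split_ifs with hb
                · rw [hb, (hA s).1 j0 i0 hij0, zero_mul]
                · rfl
              have e3 : (if i = i0 then
                  x s * (T' s * B s * (T (s - 1)).map (phiPS k p)) j0 i else 0) = 0 := by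
                split_ifs with hb
                · rw [hb, (hA s).1 j0 i0 hij0, mul_zero]
                · rfl
              rw [e2, e3, (hA s).2.1 i]
              ring
            · intro i j hij hlt
              by_cases hn : (d - 1 - i.val) * d + j.val = n
              · -- the freshly fixed entry
                have hj : j = j0 ∧ i = i0 := by
                  have henc : (d - 1 - i.val) * d + j.val
                      = (d - 1 - i0.val) * d + j0.val := by rw [henc0]; exact hn
                  have e1 : ((d - 1 - i.val) * d + j.val) % d = j.val := by
                    rw [Nat.add_comm, Nat.add_mul_mod_self_right]
                    exact Nat.mod_eq_of_lt j.isLt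
                  have e2 : ((d - 1 - i0.val) * d + j0.val) % d = j0.val := by
                    rw [Nat.add_comm, Nat.add_mul_mod_self_right]
                    exact Nat.mod_eq_of_lt j0.isLt
                  have hjv : j.val = j0.val := by rw [← e1, ← e2, henc]
                  have e4 : (d - 1 - i.val) * d = (d - 1 - i0.val) * d := by omega
                  have e5 : d - 1 - i.val = d - 1 - i0.val :=
                    Nat.eq_of_mul_eq_mul_right (by omega) e4
                  have h8 := i.isLt
                  have h9 := i0.isLt
                  have hiv : i.val = i0.val := by omega
                  exact ⟨Fin.ext hjv, Fin.ext hiv⟩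
                obtain ⟨rfl, rfl⟩ := hj
                obtain ⟨q, hq1, hq2⟩ := hxq s
                refine ⟨q, hq1, ?_⟩
                rw [hnewA i j, if_pos rfl, if_pos rfl, (hA s).2.1 i, (hA s).2.1 j]
                rw [show (T' s * B s * (T (s - 1)).map (phiPS k p)) i j
                    + PowerSeries.C (if s = 0 then ((a i : k)) else 1)
                      * PowerSeries.X ^ t i s * phiPS k p (x (s - 1))
                    - x s * (PowerSeries.C (if s = 0 then ((a j : k)) else 1)
                      * PowerSeries.X ^ t j s)
                    = (T' s * B s * (T (s - 1)).map (phiPS k p)) i j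
                    + (PowerSeries.C (if s = 0 then ((a i : k)) else 1)
                      * PowerSeries.X ^ t i s) * phiPS k p (x (s - 1))
                    - x s * (PowerSeries.C (if s = 0 then ((a j : k)) else 1)
                      * PowerSeries.X ^ t j s) by ring]
                exact hq2
              · -- an entry fixed earlier: unchanged
                have hlt' : (d - 1 - i.val) * d + j.val < n := by omega
                rw [hnewA i j]
                have e2 : (if j = j0 then (T' s * B s * (T (s - 1)).map (phiPS k p)) i i0
                    * phiPS k p (x (s - 1)) else 0) = 0 := by
                  split_ifs with hb
                  · have hvv : i0.val < i.val := by
                      have hel : (d - 1 - i.val) * d + j0.val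
                          < (d - 1 - i0.val) * d + j0.val := by
                        rw [henc0]
                        rw [hb] at hlt'
                        exact hlt'
                      have hml : (d - 1 - i.val) * d < (d - 1 - i0.val) * d := by omega
                      have hsub : d - 1 - i.val < d - 1 - i0.val :=
                        Nat.lt_of_mul_lt_mul_right hml
                      have := i.isLt
                      have := i0.isLt
                      omega
                    rw [(hA s).1 i i0 (Fin.lt_def.mpr hvv), zero_mul]
                  · rfl
                have e3 : (if i = i0 then
                    x s * (T' s * B s * (T (s - 1)).map (phiPS k p)) j0 j else 0) = 0 := by
                  split_ifs with hb
                  · have hvv : j.val < j0.val := by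
                      have hel : (d - 1 - i0.val) * d + j.val
                          < (d - 1 - i0.val) * d + j0.val := by
                        rw [henc0]
                        rw [hb] at hlt'
                        exact hlt'
                      omega
                    rw [(hA s).1 j0 j (Fin.lt_def.mpr hvv), mul_zero]
                  · rfl
                rw [e2, e3]
                have hfix : (T' s * B s * (T (s - 1)).map (phiPS k p)) i j + 0 - 0
                    = (T' s * B s * (T (s - 1)).map (phiPS k p)) i j := by ring
                rw [hfix]
                exact (hA s).2.2 i j hij hlt'
        · refine ⟨T, T', hinv, hTlow, hTdiag, fun s => ⟨(hA s).1, (hA s).2.1, ?_⟩⟩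
          intro i j hij hlt
          apply (hA s).2.2 i j hij
          have hne : (d - 1 - i.val) * d + j.val ≠ n := fun hEq => hex ⟨(i, j), hij, hEq⟩
          omega
  obtain ⟨T, T', hinv, hTlow, hTdiag, hA⟩ := key (d * d)
  refine ⟨T, T', hinv, hTlow, hTdiag, fun s => ⟨(hA s).1, (hA s).2.1, ?_⟩⟩
  intro i j hij
  apply (hA s).2.2 i j hij
  have h1 : (d - 1 - i.val) * d ≤ (d - 1) * d := Nat.mul_le_mul_right d (by omega)
  have h2 : (d - 1 + 1) = d := by omega
  have h3 : (d - 1) * d + d = d * d := by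
    calc (d - 1) * d + d = (d - 1 + 1) * d := by ring
      _ = d * d := by rw [h2]
  have := j.isLt
  omega
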